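/- Let f and g be negative convex increasing functions on ℝ_{<0}. If lim_{t→−∞} f(t)/t ≥ lim_{t→−∞} g(t)/t, then for every ε > 0 there exists C > 0 such that f(t) + εt ≤ P(f, g+C)(t) for all t < 0; consequently lim_{c→+∞} P(f, g+c) = f pointwise on ℝ_{<0}. -/

import Mathlib

open Filter MeasureTheory Metric Set
open scoped ENNReal Topology

noncomputable section

/-- The convex envelope `P(f, g+c)(t)`: the supremum at `t` of all convex functions on
`ℝ_{<0}` lying below `min(f, g+c)` there. -/
def convEnv1 (f g : ℝ → ℝ) (c : ℝ) (t : ℝ) : EReal :=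
  ⨆ (u : ℝ → ℝ) (_ : ConvexOn ℝ (Iio (0:ℝ)) u ∧
      ∀ s ∈ Iio (0:ℝ), u s ≤ min (f s) (g s + c)), ((u t : ℝ) : EReal)

/-- The slope at infinity `lim_{t→-∞} h(t)/t`, as a `limsup` in `EReal` (for convex
increasing `h` the limit exists in `[0,+∞]`). -/
def slopeAtBot (h : ℝ → ℝ) : EReal :=
  Filter.limsup (fun t : ℝ => ((h t / t : ℝ) : EReal)) atBot

/-- For a convex monotone function on `Iio 0`, `h t / t` converges at `-∞`. -/
lemma aux_tendsto (h : ℝ → ℝ) (hconv : ConvexOn ℝ (Iio (0:ℝ)) h)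
    (hmono : MonotoneOn h (Iio (0:ℝ))) :
    ∃ ℓ : ℝ, Tendsto (fun t => h t / t) atBot (𝓝 ℓ) ∧ slopeAtBot h = (ℓ : EReal) := by
  set φ : ℝ → ℝ := fun t => (h t - h (-1)) / (t - (-1)) with hφ
  have hinv : Tendsto (fun t : ℝ => t⁻¹) atBot (𝓝 (0:ℝ)) := by
    have h2 : Tendsto (fun t : ℝ => ((-t)⁻¹ : ℝ)) atBot (𝓝 0) :=
      tendsto_inv_atTop_zero.comp tendsto_neg_atBot_atTop
    have := h2.neg
    simp only [neg_zero] at this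
    refine this.congr fun t => by simp [inv_neg]
  have hφ0 : ∀ t ≤ (-2:ℝ), 0 ≤ φ t := by
    intro t ht
    have h1 : h t ≤ h (-1) := hmono (show t ∈ Iio (0:ℝ) by simp only [mem_Iio]; linarith)
      (by norm_num) (by linarith)
    exact div_nonneg_of_nonpos (by linarith) (by linarith)
  have hφmono : ∀ x y : ℝ, x ≤ y → y ≤ -2 → φ x ≤ φ y := by
    intro x y hxy hy
    exact hconv.secant_mono (by norm_num : (-1:ℝ) ∈ Iio (0:ℝ))
      (show x ∈ Iio (0:ℝ) by simp only [mem_Iio]; linarith)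
      (show y ∈ Iio (0:ℝ) by simp only [mem_Iio]; linarith)
      (by intro hc; subst hc; linarith)
      (by intro hc; subst hc; linarith)
      hxy
  set ψ : ℝ → ℝ := fun t => φ (min t (-2)) with hψ
  have hψmono : Monotone ψ := by
    intro x y hxy
    exact hφmono _ _ (min_le_min hxy le_rfl) (min_le_right _ _)
  have hψbdd : BddBelow (Set.range ψ) := by
    refine ⟨0, ?_⟩
    rintro _ ⟨t, rfl⟩
    exact hφ0 _ (min_le_right _ _)
  set ℓ : ℝ := ⨅ t, ψ t with hℓ
  have hψt : Tendsto ψ atBot (𝓝 ℓ) := tendsto_atBot_ciInf hψmono hψbdd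
  have hφt : Tendsto φ atBot (𝓝 ℓ) := by
    refine hψt.congr' ?_
    filter_upwards [eventually_le_atBot (-2:ℝ)] with t ht
    simp [hψ, min_eq_left ht]
  have hmain : Tendsto (fun t => h t / t) atBot (𝓝 ℓ) := by
    have h1 : Tendsto (fun t : ℝ => φ t * (1 + t⁻¹) + h (-1) * t⁻¹) atBot
        (𝓝 (ℓ * (1 + 0) + h (-1) * 0)) := by
      exact (hφt.mul (tendsto_const_nhds.add hinv)).add
        (tendsto_const_nhds.mul hinv)
    rw [show ℓ * (1 + 0) + h (-1) * 0 = ℓ by ring] at h1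
    refine h1.congr' ?_
    filter_upwards [eventually_le_atBot (-2:ℝ)] with t ht
    have ht0 : t ≠ 0 := by intro hc; rw [hc] at ht; norm_num at ht
    have ht1 : t + 1 ≠ 0 := by intro hc; nlinarith
    simp only [hφ, sub_neg_eq_add]
    field_simp
    ring
  refine ⟨ℓ, hmain, ?_⟩
  have : Tendsto (fun t : ℝ => ((h t / t : ℝ) : EReal)) atBot (𝓝 ((ℓ : ℝ) : EReal)) :=
    (continuous_coe_real_ereal.tendsto _).comp hmain
  exact this.limsup_eq

/-- For negative convex increasing functions `f, g` on `ℝ_{<0}`, if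
`lim_{t→-∞} f(t)/t ≥ lim_{t→-∞} g(t)/t`, then for every `ε > 0` there is `C > 0` with
`f(t) + εt ≤ P(f, g+C)(t)` for all `t < 0`; consequently `lim_{c→∞} P(f,g+c) = f`
pointwise on `ℝ_{<0}`. -/
theorem convEnv1_tendsto_of_slope (f g : ℝ → ℝ)
    (hfconv : ConvexOn ℝ (Iio (0:ℝ)) f) (hgconv : ConvexOn ℝ (Iio (0:ℝ)) g)
    (hfmono : MonotoneOn f (Iio (0:ℝ))) (hgmono : MonotoneOn g (Iio (0:ℝ)))
    (hfneg : ∀ t < (0:ℝ), f t < 0) (hgneg : ∀ t < (0:ℝ), g t < 0)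
    (hslope : slopeAtBot g ≤ slopeAtBot f) :
    (∀ ε : ℝ, 0 < ε → ∃ C : ℝ, 0 < C ∧ ∀ t < (0:ℝ),
        ((f t + ε * t : ℝ) : EReal) ≤ convEnv1 f g C t) ∧
      (∀ t < (0:ℝ),
        Tendsto (fun c : ℝ => convEnv1 f g c t) atTop (𝓝 ((f t : ℝ) : EReal))) := by
  obtain ⟨lf, hlf, hlfs⟩ := aux_tendsto f hfconv hfmono
  obtain ⟨lg, hlg, hlgs⟩ := aux_tendsto g hgconv hgmono
  have hle : lg ≤ lf := by
    rw [hlfs, hlgs] at hslope; exact_mod_cast hslope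
  have key : ∀ ε : ℝ, 0 < ε → ∃ C : ℝ, 0 < C ∧ ∀ t < (0:ℝ), f t + ε * t ≤ g t + C := by
    intro ε hε
    have h1 : ∀ᶠ t in atBot, lf - ε/2 < f t / t :=
      hlf.eventually (eventually_gt_nhds (by linarith))
    have h2 : ∀ᶠ t in atBot, g t / t < lg + ε/2 :=
      hlg.eventually (eventually_lt_nhds (by linarith))
    obtain ⟨T₀, hT⟩ := eventually_atBot.mp (h1.and h2)
    set T : ℝ := min T₀ (-1) with hTdef
    have hTneg : T < 0 := lt_of_le_of_lt (min_le_right _ _) (by norm_num)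
    refine ⟨max 1 (-(g T)), lt_of_lt_of_le one_pos (le_max_left _ _), ?_⟩
    intro t ht
    rcases le_or_gt t T with h | h
    · obtain ⟨hf1, hg1⟩ := hT t (le_trans h (min_le_left _ _))
      have htneg : t < 0 := lt_of_le_of_lt h hTneg
      have h3 : (g t - f t) / t < ε := by
        rw [sub_div]; linarith
      have h4 := (div_lt_iff_of_neg htneg).mp h3
      have h5 : (0:ℝ) < max 1 (-(g T)) := lt_of_lt_of_le one_pos (le_max_left _ _)
      linarith
    · have hgt : g T ≤ g t := hgmono (mem_Iio.mpr hTneg) (mem_Iio.mpr ht) h.le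
      have hft : f t < 0 := hfneg t ht
      have h5 : -(g T) ≤ max 1 (-(g T)) := le_max_right _ _
      have hεt : ε * t < 0 := mul_neg_of_pos_of_neg hε ht
      linarith
  have env_ge : ∀ ε : ℝ, 0 < ε → ∃ C : ℝ, 0 < C ∧ ∀ t < (0:ℝ),
      ((f t + ε * t : ℝ) : EReal) ≤ convEnv1 f g C t := by
    intro ε hε
    obtain ⟨C, hC, hbound⟩ := key ε hε
    refine ⟨C, hC, fun t ht => ?_⟩
    have huconv : ConvexOn ℝ (Iio (0:ℝ)) (fun s => f s + ε * s) := by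
      have := hfconv.add ((convexOn_id (convex_Iio (0:ℝ))).smul hε.le)
      exact this
    have hule : ∀ s ∈ Iio (0:ℝ), f s + ε * s ≤ min (f s) (g s + C) := by
      intro s hs
      simp only [mem_Iio] at hs
      exact le_min (by nlinarith [mul_neg_of_pos_of_neg hε hs]) (hbound s hs)
    exact le_iSup_of_le (fun s => f s + ε * s) (le_iSup_of_le ⟨huconv, hule⟩ le_rfl)
  have env_le : ∀ (c : ℝ) (t : ℝ), t < 0 → convEnv1 f g c t ≤ ((f t : ℝ) : EReal) := by
    intro c t ht
    refine iSup_le fun u => iSup_le fun hu => ?_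
    exact_mod_cast (hu.2 t ht).trans (min_le_left _ _)
  have env_mono : ∀ t c c' : ℝ, c ≤ c' → convEnv1 f g c t ≤ convEnv1 f g c' t := by
    intro t c c' hcc
    refine iSup_le fun u => iSup_le fun hu => ?_
    exact le_iSup_of_le u (le_iSup_of_le
      ⟨hu.1, fun s hs => (hu.2 s hs).trans (min_le_min le_rfl (by linarith))⟩ le_rfl)
  refine ⟨env_ge, ?_⟩
  intro t ht
  rw [tendsto_order]
  constructor
  · intro a ha
    have hex : ∃ ε : ℝ, 0 < ε ∧ a < ((f t + ε * t : ℝ) : EReal) := by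
      induction a using EReal.rec with
      | bot => exact ⟨1, one_pos, EReal.bot_lt_coe _⟩
      | coe a' =>
        have ha' : a' < f t := by exact_mod_cast ha
        refine ⟨(f t - a') / (-2 * t), div_pos (by linarith) (by linarith), ?_⟩
        have htne : t ≠ 0 := ne_of_lt ht
        have heq : (f t - a') / (-2 * t) * t = -(f t - a') / 2 := by
          field_simp
        exact_mod_cast show a' < f t + (f t - a') / (-2 * t) * t by rw [heq]; linarith
      | top => exact absurd ha (by simp)
    obtain ⟨ε, hε, haε⟩ := hex
    obtain ⟨C, hC, hbound⟩ := env_ge ε hε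
    filter_upwards [eventually_ge_atTop C] with c hc
    exact lt_of_lt_of_le haε ((hbound t ht).trans (env_mono t C c hc))
  · intro a ha
    filter_upwards with c
    exact lt_of_le_of_lt (env_le c t ht) ha


end
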